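/- Let f : A ⇀ B be a partial function. Then the following are equivalent: (1) for every set C and every partial function g : C ⇀ A, if rank(g⬝f) = rank(g) then dom(g⬝f) = dom(g) and ker(g⬝f) = ker(g) (i.e., f is R-stable in the category of partial functions); (2) ran(f) is finite, or f is both full (dom(f) = A) and injective. -/

import Mathlib

universe u

/-- The kernel of a partial function, as a binary relation: `x` and `y` are related iff both lie
in the domain and have the same value. -/
def pker {α β : Type*} (f : α →. β) : α → α → Prop :=
  fun x y => x ∈ f.Dom ∧ y ∈ f.Dom ∧ f x = f y

section Aux

variable {A B : Type u}

private lemma mem_comp' {f : A →. B} {C : Type u} {g : C →. A} {c : C} {b : B} :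
    b ∈ f.comp g c ↔ ∃ a, a ∈ g c ∧ b ∈ f a := by
  simp [PFun.comp_apply, Part.mem_bind_iff]
  exact Part.mem_bind_iff

private lemma ran_comp_subset (f : A →. B) {C : Type u} (g : C →. A) :
    (f.comp g).ran ⊆ f.ran := by
  rintro b ⟨c, hb⟩
  obtain ⟨a, _, hfa⟩ := mem_comp'.1 hb
  exact ⟨a, hfa⟩

/-- The construction used in the forward direction: the total function
`Option ↥f.ran → A` sending `none` to `a` and `some b` to `s b`, viewed as a partial
function. If `s` is a section of `f` and `f.ran` is infinite, then the composite has the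
same rank. -/
private lemma rank_eq_of_section (f : A →. B) (hinf : f.ran.Infinite)
    (s : ↥f.ran → A) (hs : ∀ b, (b : B) ∈ f (s b)) (a : A) :
    Cardinal.mk ↥(f.comp (fun o : Option ↥f.ran => Part.some (o.elim a s))).ran
      = Cardinal.mk ↥(PFun.ran (fun o : Option ↥f.ran => Part.some (o.elim a s))) := by
  set g : Option ↥f.ran →. A := fun o => Part.some (o.elim a s) with hg
  have s_inj : Function.Injective s := by
    intro b₁ b₂ h
    have h1 := hs b₁
    have h2 := hs b₂
    rw [h] at h1
    exact Subtype.ext (Part.mem_unique h1 h2)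
  have hran1 : (f.comp g).ran = f.ran := by
    apply Set.Subset.antisymm (ran_comp_subset f g)
    intro b hb
    refine ⟨some ⟨b, hb⟩, mem_comp'.2 ⟨s ⟨b, hb⟩, ?_, hs ⟨b, hb⟩⟩⟩
    simp [hg]
  have hran2 : g.ran = insert a (Set.range s) := by
    ext x
    constructor
    · rintro ⟨o, ho⟩
      have hx : o.elim a s = x := by
        have := (by simpa [hg] using ho : x = o.elim a s)
        exact this.symm
      cases o with
      | none => exact Or.inl hx.symm
      | some b => exact Or.inr ⟨b, hx⟩
    · rintro (rfl | ⟨b, rfl⟩)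
      · exact ⟨none, by simp [hg]⟩
      · exact ⟨some b, by simp [hg]⟩
  have haleph : Cardinal.aleph0 ≤ Cardinal.mk ↥f.ran := by
    rw [← Cardinal.infinite_iff]
    exact Set.infinite_coe_iff.2 hinf
  have hr : Cardinal.mk ↥(Set.range s) = Cardinal.mk ↥f.ran :=
    Cardinal.mk_range_eq s s_inj
  rw [hran1, hran2]
  apply le_antisymm
  · rw [← hr]; exact Cardinal.mk_le_mk_of_subset (Set.subset_insert _ _)
  · calc Cardinal.mk ↥(insert a (Set.range s)) ≤ Cardinal.mk ↥(Set.range s) + 1 :=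
          Cardinal.mk_insert_le
    _ = Cardinal.mk ↥f.ran + 1 := by rw [hr]
    _ = Cardinal.mk ↥f.ran := Cardinal.add_one_of_aleph0_le haleph

end Aux

/-- A partial function `f : A ⇀ B` is R-stable (i.e. for every `g : C ⇀ A`,
`rank (g⬝f) = rank g` implies `dom (g⬝f) = dom g` and `ker (g⬝f) = ker g`) iff
`ran f` is finite, or `f` is full (`dom f = A`) and injective. -/
theorem R_stable_iff_PT {A B : Type u} (f : A →. B) :
    (∀ (C : Type u) (g : C →. A),
        Cardinal.mk ↥(f.comp g).ran = Cardinal.mk ↥g.ran →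
          ((f.comp g).Dom = g.Dom ∧ pker (f.comp g) = pker g)) ↔
      (f.ran.Finite ∨
        (f.Dom = Set.univ ∧ ∀ x₁ x₂ : A, ∀ y : B, y ∈ f x₁ → y ∈ f x₂ → x₁ = x₂)) := by
  constructor
  · intro H
    by_contra hcon
    push_neg at hcon
    obtain ⟨hinf', hni⟩ := hcon
    have hinf : f.ran.Infinite := hinf'
    have sec : ∀ b : ↥f.ran, ∃ x, (b : B) ∈ f x := fun b => b.2
    by_cases hfull : f.Dom = Set.univ
    · -- f is full but not injective
      obtain ⟨x₁, x₂, y, hy1, hy2, hne⟩ := hni hfull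
      have hyran : y ∈ f.ran := ⟨x₁, hy1⟩
      classical
      set s : ↥f.ran → A := fun b => if b = ⟨y, hyran⟩ then x₁ else Classical.choose (sec b)
        with hsdef
      have hs : ∀ b, (b : B) ∈ f (s b) := by
        intro b
        show (b : B) ∈ f (if b = ⟨y, hyran⟩ then x₁ else Classical.choose (sec b))
        split_ifs with hb
        · subst hb; exact hy1
        · exact Classical.choose_spec (sec b)
      obtain ⟨hdom, hker⟩ := H (Option ↥f.ran) (fun o => Part.some (o.elim x₂ s))
        (rank_eq_of_section f hinf s hs x₂)
      set g : Option ↥f.ran →. A := fun o => Part.some (o.elim x₂ s) with hg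
      have hsy : s ⟨y, hyran⟩ = x₁ := by
        show (if (⟨y, hyran⟩ : ↥f.ran) = ⟨y, hyran⟩ then x₁ else _) = x₁
        exact if_pos rfl
      have hd1 : (some ⟨y, hyran⟩ : Option ↥f.ran) ∈ (f.comp g).Dom := by
        rw [PFun.mem_dom]
        exact ⟨y, mem_comp'.2 ⟨s ⟨y, hyran⟩, by simp [hg], hs _⟩⟩
      have hd2 : (none : Option ↥f.ran) ∈ (f.comp g).Dom := by
        rw [PFun.mem_dom]
        exact ⟨y, mem_comp'.2 ⟨x₂, by simp [hg], hy2⟩⟩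
      have hval : (f.comp g) (some ⟨y, hyran⟩) = (f.comp g) none := by
        have h1 : (f.comp g) (some ⟨y, hyran⟩) = f x₁ := by
          rw [PFun.comp_apply]
          show (Part.some ((some ⟨y, hyran⟩ : Option ↥f.ran).elim x₂ s)).bind f = f x₁
          refine (Part.bind_some _ _).trans ?_
          show f (s ⟨y, hyran⟩) = f x₁
          rw [hsy]
        have h2 : (f.comp g) none = f x₂ := by
          rw [PFun.comp_apply]
          show (Part.some ((none : Option ↥f.ran).elim x₂ s)).bind f = f x₂
          refine (Part.bind_some _ _).trans ?_
          rfl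
        rw [h1, h2]
        apply Part.ext
        intro z
        constructor
        · intro hz; rwa [Part.mem_unique hz hy1]
        · intro hz; rwa [Part.mem_unique hz hy2]
      have hk : pker (f.comp g) (some ⟨y, hyran⟩) none := ⟨hd1, hd2, hval⟩
      rw [hker] at hk
      obtain ⟨-, -, hgv⟩ := hk
      have hx12 : x₁ = x₂ := by
        have h1 : x₁ ∈ g (some ⟨y, hyran⟩) := by
          show x₁ ∈ Part.some (s ⟨y, hyran⟩)
          rw [hsy]; exact Part.mem_some x₁
        have h2 : x₂ ∈ g none := Part.mem_some x₂
        rw [hgv] at h1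
        exact Part.mem_unique h1 h2
      exact hne hx12
    · -- f is not full
      obtain ⟨a, ha⟩ : ∃ a, a ∉ f.Dom := by
        by_contra h
        push_neg at h
        exact hfull (Set.eq_univ_of_forall h)
      classical
      set s : ↥f.ran → A := fun b => Classical.choose (sec b) with hsdef
      have hs : ∀ b, (b : B) ∈ f (s b) := fun b => Classical.choose_spec (sec b)
      obtain ⟨hdom, -⟩ := H (Option ↥f.ran) (fun o => Part.some (o.elim a s))
        (rank_eq_of_section f hinf s hs a)
      set g : Option ↥f.ran →. A := fun o => Part.some (o.elim a s) with hg
      have hnd : (none : Option ↥f.ran) ∈ g.Dom := trivial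
      rw [← hdom, PFun.mem_dom] at hnd
      obtain ⟨b, hb⟩ := hnd
      obtain ⟨x, hx, hfx⟩ := mem_comp'.1 hb
      have hxa : x = a := by simpa [hg] using hx
      subst hxa
      exact ha ((PFun.mem_dom _ _).2 ⟨b, hfx⟩)
  · rintro (hfin | ⟨hfull, hinj⟩) <;> intro C g hrank
    · -- finite range case
      classical
      set S : Set A := g.ran ∩ f.Dom with hS
      have finFG : (f.comp g).ran.Finite := hfin.subset (ran_comp_subset f g)
      have finG : g.ran.Finite := by
        rw [← Cardinal.lt_aleph0_iff_set_finite, ← hrank,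
          Cardinal.lt_aleph0_iff_set_finite]
        exact finFG
      have finS : S.Finite := finG.subset Set.inter_subset_left
      have hu : ∀ x : ↥S, ((f (x : A)).get (x.2.2) : B) ∈ (f.comp g).ran := by
        rintro ⟨x, hxg, hxd⟩
        obtain ⟨c, hc⟩ := hxg
        exact ⟨c, mem_comp'.2 ⟨x, hc, Part.get_mem hxd⟩⟩
      set u : ↥S → ↥(f.comp g).ran := fun x => ⟨(f (x : A)).get (x.2.2), hu x⟩ with hudef
      have u_surj : Function.Surjective u := by
        rintro ⟨b, hb⟩
        obtain ⟨c, hc⟩ := hb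
        obtain ⟨x, hxg, hfx⟩ := mem_comp'.1 hc
        have hxd : x ∈ f.Dom := (PFun.mem_dom _ _).2 ⟨b, hfx⟩
        refine ⟨⟨x, ⟨c, hxg⟩, hxd⟩, ?_⟩
        exact Subtype.ext (Part.get_eq_of_mem hfx _)
      have cardle := Cardinal.mk_le_of_surjective u_surj
      rw [hrank] at cardle
      have hSeq : S = g.ran := by
        have h1 : Nat.card ↥g.ran ≤ Nat.card ↥S :=
          Cardinal.toNat_le_toNat cardle finS.lt_aleph0
        rw [Nat.card_coe_set_eq, Nat.card_coe_set_eq] at h1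
        exact Set.eq_of_subset_of_ncard_le Set.inter_subset_left h1 finG
      have hranSub : g.ran ⊆ f.Dom := by
        rw [← hSeq]; exact Set.inter_subset_right
      have hdomeq : (f.comp g).Dom = g.Dom := by
        ext c
        simp only [PFun.mem_dom]
        constructor
        · rintro ⟨b, hb⟩
          obtain ⟨x, hx, -⟩ := mem_comp'.1 hb
          exact ⟨x, hx⟩
        · rintro ⟨x, hx⟩
          have hxd : x ∈ f.Dom := hranSub ⟨c, hx⟩
          obtain ⟨b, hb⟩ := (PFun.mem_dom _ _).1 hxd
          exact ⟨b, mem_comp'.2 ⟨x, hx, hb⟩⟩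
      refine ⟨hdomeq, ?_⟩
      haveI : Finite ↥S := finS
      have u_bij : Function.Bijective u := by
        rw [Nat.bijective_iff_surjective_and_card]
        refine ⟨u_surj, ?_⟩
        have hmk : Cardinal.mk ↥S = Cardinal.mk ↥(f.comp g).ran := by
          rw [hSeq, hrank]
        exact congrArg Cardinal.toNat hmk
      ext x y
      unfold pker
      constructor
      · rintro ⟨hx, hy, hval⟩
        have hxg : x ∈ g.Dom := hdomeq ▸ hx
        have hyg : y ∈ g.Dom := hdomeq ▸ hy
        refine ⟨hxg, hyg, ?_⟩
        have haxS : (g x).get hxg ∈ S := by rw [hSeq]; exact ⟨x, Part.get_mem hxg⟩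
        have hayS : (g y).get hyg ∈ S := by rw [hSeq]; exact ⟨y, Part.get_mem hyg⟩
        have hcx : (f.comp g) x = f ((g x).get hxg) := by
          rw [PFun.comp_apply]
          conv_lhs => rw [← Part.some_get hxg]
          exact Part.bind_some _ _
        have hcy : (f.comp g) y = f ((g y).get hyg) := by
          rw [PFun.comp_apply]
          conv_lhs => rw [← Part.some_get hyg]
          exact Part.bind_some _ _
        have hfeq : f ((g x).get hxg) = f ((g y).get hyg) := by
          rw [← hcx, ← hcy, hval]
        have hux : u ⟨(g x).get hxg, haxS⟩ = u ⟨(g y).get hyg, hayS⟩ := by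
          apply Subtype.ext
          show (f ((g x).get hxg)).get _ = (f ((g y).get hyg)).get _
          apply Part.get_eq_of_mem
          rw [hfeq]
          exact Part.get_mem _
        have hget : (g x).get hxg = (g y).get hyg :=
          congrArg Subtype.val (u_bij.1 hux)
        conv_lhs => rw [← Part.some_get hxg]
        conv_rhs => rw [← Part.some_get hyg]
        rw [hget]
      · rintro ⟨hx, hy, hval⟩
        refine ⟨hdomeq.symm ▸ hx, hdomeq.symm ▸ hy, ?_⟩
        rw [PFun.comp_apply, PFun.comp_apply, hval]
    · -- full and injective case
      have hdomeq : (f.comp g).Dom = g.Dom := by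
        ext c
        simp only [PFun.mem_dom]
        constructor
        · rintro ⟨b, hb⟩
          obtain ⟨x, hx, -⟩ := mem_comp'.1 hb
          exact ⟨x, hx⟩
        · rintro ⟨x, hx⟩
          have hxd : x ∈ f.Dom := hfull ▸ Set.mem_univ x
          obtain ⟨b, hb⟩ := (PFun.mem_dom _ _).1 hxd
          exact ⟨b, mem_comp'.2 ⟨x, hx, hb⟩⟩
      refine ⟨hdomeq, ?_⟩
      ext x y
      unfold pker
      constructor
      · rintro ⟨hx, hy, hval⟩
        refine ⟨hdomeq ▸ hx, hdomeq ▸ hy, ?_⟩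
        obtain ⟨b, hb⟩ := (PFun.mem_dom _ _).1 hx
        obtain ⟨ax, haxg, hbx⟩ := mem_comp'.1 hb
        have hb' : b ∈ (f.comp g) y := hval ▸ hb
        obtain ⟨ay, hayg, hby⟩ := mem_comp'.1 hb'
        have hxy : ax = ay := hinj ax ay b hbx hby
        subst hxy
        apply Part.ext
        intro z
        constructor
        · intro hz; rwa [Part.mem_unique hz haxg]
        · intro hz; rwa [Part.mem_unique hz hayg]
      · rintro ⟨hx, hy, hval⟩
        refine ⟨hdomeq.symm ▸ hx, hdomeq.symm ▸ hy, ?_⟩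
        rw [PFun.comp_apply, PFun.comp_apply, hval]
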